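/- Suppose ‖k(x,·)‖_{H₀} ≤ B and ‖∇_x k(x,·)‖_H ≤ B for all x, that ∇log π is M-Lipschitz, and that sup_n ∫ ‖x‖ dμ_n(x) < ∞ for a sequence (μ_n) in P₂(X). Then there exists C > 0 such that I_Stein(μ_n|π) ≤ C for all n. -/
import Mathlib


open MeasureTheory
open scoped RealInnerProductSpace

/-- **Uniformly bounded first moments imply a uniformly bounded Stein Fisher information.**

`X = ℝ^d`.  The RKHS `H₀` of the kernel `k` is modelled via a feature map `φ` with
`k x y = ⟪φ x, φ y⟫` (so `‖k(x,·)‖_{H₀} = ‖φ x‖`) and its derivative feature map `Dφ`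
(so `∂_{x_i} k(x,·)` corresponds to `Dφ x eᵢ`). Assumptions: `‖k(x,·)‖_{H₀} ≤ B` and
`‖∇ₓ k(x,·)‖_H ≤ B` for all `x`; `∇log π` (the score of `π ∝ e^{-V}`) is `M`-Lipschitz;
and `sup_n ∫‖x‖ dμ_n(x) < ∞`.  `S n = S_{μ_n}∇log(μ_n/π)` is given by its
integration-by-parts representation
`(S n)_i = ∫ [(∇log π(x))_i φ(x) + ∂_{x_i}φ(x)] dμ_n(x)`, and
`I_Stein(μ_n|π) = ‖S n‖²_H = ∑ᵢ ‖(S n)ᵢ‖²`.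
Conclusion: there is `C > 0` with `I_Stein(μ_n|π) ≤ C` for all `n`. -/
theorem istein_uniformly_bounded {d : ℕ}
    {H₀ : Type*} [NormedAddCommGroup H₀] [InnerProductSpace ℝ H₀] [CompleteSpace H₀]
    (k : EuclideanSpace ℝ (Fin d) → EuclideanSpace ℝ (Fin d) → ℝ)
    (φ : EuclideanSpace ℝ (Fin d) → H₀)
    (Dφ : EuclideanSpace ℝ (Fin d) → EuclideanSpace ℝ (Fin d) →L[ℝ] H₀)
    (hk : ∀ x y, k x y = ⟪φ x, φ y⟫)
    (hφdiff : ∀ x, HasFDerivAt φ (Dφ x) x)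
    (B : ℝ) (hB : 0 < B)
    (hkB : ∀ x, ‖φ x‖ ≤ B)
    (hdkB : ∀ x, Real.sqrt (∑ i, ‖Dφ x (EuclideanSpace.single i 1)‖ ^ 2) ≤ B)
    -- the score ∇log π of the target, M-Lipschitz
    (scorePi : EuclideanSpace ℝ (Fin d) → EuclideanSpace ℝ (Fin d)) (M : ℝ)
    (hscoreLip : ∀ x y, ‖scorePi x - scorePi y‖ ≤ M * ‖x - y‖)
    (μ : ℕ → Measure (EuclideanSpace ℝ (Fin d)))
    [∀ n, IsProbabilityMeasure (μ n)]
    -- uniformly bounded first moments: sup_n ∫ ‖x‖ dμ_n < ∞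
    (hmom_int : ∀ n, Integrable (fun x => ‖x‖) (μ n))
    (K : ℝ) (hmom : ∀ n, ∫ x, ‖x‖ ∂ μ n ≤ K)
    -- S n = S_{μ_n} ∇log(μ_n/π), via integration by parts
    (S : ℕ → Fin d → H₀)
    (hS : ∀ n i, S n i =
      ∫ x, (scorePi x i • φ x + Dφ x (EuclideanSpace.single i 1)) ∂ μ n)
    (hS_int : ∀ n i, Integrable
      (fun x => scorePi x i • φ x + Dφ x (EuclideanSpace.single i 1)) (μ n))
    (Istein : ℕ → ℝ)                -- n ↦ I_Stein(μ_n|π)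
    (hI : ∀ n, Istein n = ∑ i, ‖S n i‖ ^ 2) :
    ∃ C : ℝ, 0 < C ∧ ∀ n, Istein n ≤ C := by
  classical
  set A : ℝ := ‖scorePi 0‖ with hA
  set c : ℝ := B * (A + |M| * K + 1) with hc
  have hK : 0 ≤ K := le_trans (integral_nonneg (fun x => norm_nonneg x)) (hmom 0)
  have hc0 : 0 ≤ c := by
    have : 0 ≤ A := norm_nonneg _
    positivity
  have hSbound : ∀ n i, ‖S n i‖ ≤ c := by
    intro n i
    rw [hS n i]
    have h1 : ‖∫ x, (scorePi x i • φ x + Dφ x (EuclideanSpace.single i 1)) ∂ μ n‖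
        ≤ ∫ x, ‖scorePi x i • φ x + Dφ x (EuclideanSpace.single i 1)‖ ∂ μ n :=
      norm_integral_le_integral_norm _
    have hpt : ∀ x, ‖scorePi x i • φ x + Dφ x (EuclideanSpace.single i 1)‖
        ≤ B * (A + |M| * ‖x‖ + 1) := by
      intro x
      have h2 : ‖Dφ x (EuclideanSpace.single i 1)‖ ≤ B := by
        have := hdkB x
        calc ‖Dφ x (EuclideanSpace.single i 1)‖
            = Real.sqrt (‖Dφ x (EuclideanSpace.single i 1)‖ ^ 2) := by
              rw [Real.sqrt_sq (norm_nonneg _)]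
          _ ≤ Real.sqrt (∑ j, ‖Dφ x (EuclideanSpace.single j 1)‖ ^ 2) :=
              Real.sqrt_le_sqrt (Finset.single_le_sum
                (f := fun j => ‖Dφ x (EuclideanSpace.single j 1)‖ ^ 2)
                (fun j _ => by positivity) (Finset.mem_univ i))
          _ ≤ B := this
      have h3 : |scorePi x i| ≤ ‖scorePi x‖ := by
        have := EuclideanSpace.norm_eq (scorePi x)
        calc |scorePi x i| = Real.sqrt (|scorePi x i| ^ 2) := by
              rw [Real.sqrt_sq (abs_nonneg _)]
          _ ≤ Real.sqrt (∑ j, |scorePi x j| ^ 2) :=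
              Real.sqrt_le_sqrt (Finset.single_le_sum
                (f := fun j => |scorePi x j| ^ 2)
                (fun j _ => by positivity) (Finset.mem_univ i))
          _ = ‖scorePi x‖ := (EuclideanSpace.norm_eq (scorePi x)).symm
      have h4 : ‖scorePi x‖ ≤ A + |M| * ‖x‖ := by
        have := hscoreLip x 0
        calc ‖scorePi x‖ ≤ ‖scorePi x - scorePi 0‖ + ‖scorePi 0‖ := by
              simpa using norm_add_le (scorePi x - scorePi 0) (scorePi 0)
          _ ≤ M * ‖x - 0‖ + A := by rw [hA]; linarith [hscoreLip x 0]
          _ ≤ |M| * ‖x‖ + A := by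
              have : M * ‖x - 0‖ ≤ |M| * ‖x‖ := by
                rw [sub_zero]
                exact mul_le_mul_of_nonneg_right (le_abs_self M) (norm_nonneg x)
              linarith
          _ = A + |M| * ‖x‖ := by ring
      calc ‖scorePi x i • φ x + Dφ x (EuclideanSpace.single i 1)‖
          ≤ ‖scorePi x i • φ x‖ + ‖Dφ x (EuclideanSpace.single i 1)‖ := norm_add_le _ _
        _ = |scorePi x i| * ‖φ x‖ + ‖Dφ x (EuclideanSpace.single i 1)‖ := by
            rw [norm_smul, Real.norm_eq_abs]
        _ ≤ ‖scorePi x‖ * B + B := by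
            have := hkB x
            have h5 : |scorePi x i| * ‖φ x‖ ≤ ‖scorePi x‖ * B :=
              mul_le_mul h3 (hkB x) (norm_nonneg _) ((abs_nonneg _).trans h3)
            linarith
        _ ≤ (A + |M| * ‖x‖) * B + B := by
            nlinarith [h4, hB.le]
        _ = B * (A + |M| * ‖x‖ + 1) := by ring
    have hgint : Integrable (fun x => B * (A + |M| * ‖x‖ + 1)) (μ n) := by
      have : Integrable (fun x : EuclideanSpace ℝ (Fin d) => ‖x‖) (μ n) := hmom_int n
      have h6 : Integrable (fun x : EuclideanSpace ℝ (Fin d) => |M| * ‖x‖) (μ n) :=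
        this.const_mul _
      have h7 : Integrable (fun x : EuclideanSpace ℝ (Fin d) => A + |M| * ‖x‖ + 1) (μ n) := by
        simpa [add_assoc, add_comm, add_left_comm] using
          ((integrable_const A).add h6).add (integrable_const 1)
      exact h7.const_mul B
    have h8 : ∫ x, ‖scorePi x i • φ x + Dφ x (EuclideanSpace.single i 1)‖ ∂ μ n
        ≤ ∫ x, B * (A + |M| * ‖x‖ + 1) ∂ μ n :=
      integral_mono ((hS_int n i).norm) hgint hpt
    have h9 : ∫ x, B * (A + |M| * ‖x‖ + 1) ∂ μ n ≤ c := by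
      have hmeas : (μ n) Set.univ = 1 := measure_univ
      rw [integral_const_mul]
      have hi1 : Integrable (fun x : EuclideanSpace ℝ (Fin d) => A + |M| * ‖x‖) (μ n) :=
        (integrable_const A).add ((hmom_int n).const_mul _)
      have h10 : ∫ x, (A + |M| * ‖x‖ + 1) ∂ μ n
          = A + |M| * ∫ x, ‖x‖ ∂ μ n + 1 := by
        rw [integral_add hi1 (integrable_const 1),
          integral_add (integrable_const A) ((hmom_int n).const_mul _),
          integral_const, integral_const, integral_const_mul]
        simp
      rw [h10, hc]
      have : |M| * ∫ x, ‖x‖ ∂ μ n ≤ |M| * K :=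
        mul_le_mul_of_nonneg_left (hmom n) (abs_nonneg M)
      nlinarith [hB.le]
    linarith
  refine ⟨d * c ^ 2 + 1, by positivity, fun n => ?_⟩
  rw [hI n]
  have : ∑ i : Fin d, ‖S n i‖ ^ 2 ≤ ∑ _i : Fin d, c ^ 2 := by
    apply Finset.sum_le_sum
    intro i _
    exact pow_le_pow_left₀ (norm_nonneg _) (hSbound n i) 2
  simp only [Finset.sum_const, Finset.card_univ, Fintype.card_fin, nsmul_eq_mul] at this
  linarith
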